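/- (Graphical step in Rule 3's proof) Let G be a DAG, and let C₂ be a node set none of whose elements is an ancestor of D. If B is d-separated from C given D in the graph G_{C̄₂} obtained by deleting all edges into C₂, where C ⊇ C₂, then there is no directed path from C₂ to B in G. -/
import Mathlib


/-- `b` is a collider on a path segment `a — b — c` for edge relation `E`:
both edges point into `b`. -/
def IsCollider {V : Type*} (E : V → V → Prop) (a b c : V) : Prop := E a b ∧ E c b

/-- The walk `f` (a sequence of vertices, consecutive ones adjacent in either direction)
is blocked at internal position `i` by the conditioning set `Z`: either `f i` is a
non-collider lying in `Z`, or `f i` is a collider such that neither it nor any of its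
descendants lies in `Z`. -/
def BlockedAt {V : Type*} (E : V → V → Prop) (Z : Set V) (f : ℕ → V) (i : ℕ) : Prop :=
  (¬ IsCollider E (f (i - 1)) (f i) (f (i + 1)) ∧ f i ∈ Z) ∨
  (IsCollider E (f (i - 1)) (f i) (f (i + 1)) ∧ f i ∉ Z ∧
    ∀ z ∈ Z, ¬ Relation.TransGen E (f i) z)

/-- d-separation: every walk from `B` to `C` (consecutive vertices adjacent in `E` in
either direction) is blocked by `Z` at some internal position. -/
def dSep {V : Type*} (E : V → V → Prop) (B C Z : Set V) : Prop :=
  ∀ (n : ℕ) (f : ℕ → V), f 0 ∈ B → f n ∈ C →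
    (∀ i < n, E (f i) (f (i + 1)) ∨ E (f (i + 1)) (f i)) →
    ∃ i, 0 < i ∧ i < n ∧ BlockedAt E Z f i

/-- The set of ancestors of `D`: nodes with a directed path of length ≥ 1 into `D`. -/
def ancSet {V : Type*} (E : V → V → Prop) (D : Set V) : Set V :=
  {v | ∃ d ∈ D, Relation.TransGen E v d}

/-- From a directed path `c ⟶ b` with `c ∈ C₂`, `b ∉ C₂`, extract the suffix after the
last visit to `C₂`. -/
lemma extract_suffix {V : Type*} (E : V → V → Prop) (C₂ : Set V) {c b : V}
    (h : Relation.TransGen E c b) (hc : c ∈ C₂) (hb : b ∉ C₂) :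
    ∃ (n : ℕ) (f : ℕ → V), 1 ≤ n ∧ f 0 ∈ C₂ ∧ f n = b ∧
      (∀ i, 1 ≤ i → i ≤ n → f i ∉ C₂) ∧ ∀ i < n, E (f i) (f (i + 1)) := by
  induction h with
  | @single b'' h =>
    refine ⟨1, fun i => if i = 0 then c else b'', le_rfl, by simpa using hc, by simp, ?_, ?_⟩
    · intro i h1 h2
      simp only [show i ≠ 0 by omega, if_false]
      exact hb
    · intro i hi
      interval_cases i
      simpa using h
  | @tail m b' hcm hmb ih =>
    by_cases hm : m ∈ C₂
    · refine ⟨1, fun i => if i = 0 then m else b', le_rfl, by simpa using hm, by simp, ?_, ?_⟩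
      · intro i h1 h2
        simp only [show i ≠ 0 by omega, if_false]
        exact hb
      · intro i hi
        interval_cases i
        simpa using hmb
    · obtain ⟨n, f, hn, h0, hend, hmid, hedge⟩ := ih hm
      refine ⟨n + 1, fun i => if i ≤ n then f i else b', by omega, ?_, ?_, ?_, ?_⟩
      · simpa using h0
      · simp
      · intro i h1 h2
        by_cases hi : i ≤ n
        · simp only [hi, if_true]; exact hmid i h1 hi
        · simp only [hi, if_false]; exact hb
      · intro i hi
        rcases lt_or_ge i n with h' | h'
        · simp only [show i ≤ n by omega, if_true, show i + 1 ≤ n by omega]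
          exact hedge i h'
        · have hi' : i = n := by omega
          simp only [hi', le_rfl, if_true, show ¬ n + 1 ≤ n by omega, if_false, hend]
          exact hmb

lemma chain_transGen {V : Type*} {E : V → V → Prop} {f : ℕ → V} {n : ℕ}
    (hedge : ∀ i < n, E (f i) (f (i + 1))) :
    ∀ k, 1 ≤ k → k ≤ n → Relation.TransGen E (f 0) (f k) := by
  intro k
  induction k with
  | zero => omega
  | succ k ih =>
    intro _ hk
    rcases Nat.eq_zero_or_pos k with h | h
    · subst h; exact Relation.TransGen.single (hedge 0 (by omega))
    · exact (ih h (by omega)).tail (hedge k (by omega))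

/-- Graphical step in Rule 3's proof. Let `G` be a DAG and `C₂ ⊆ C` a node
set none of whose elements is an ancestor of `D`. If `B` is d-separated from `C` given `D`
in the graph `G_{C̄₂}` obtained by deleting all edges into `C₂`, then there is no directed
path from `C₂` to `B` in `G`. -/
theorem rule3_graphical_step {V : Type*} (E : V → V → Prop)
    (hacyc : ∀ v, ¬ Relation.TransGen E v v)
    (B C D C₂ : Set V)
    (hBC : Disjoint B C) (hBD : Disjoint B D) (hCD : Disjoint C D)
    (hC₂ : C₂ ⊆ C) (hC₂anc : Disjoint C₂ (ancSet E D))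
    (hd : dSep (fun u v => E u v ∧ v ∉ C₂) B C D) :
    ∀ c ∈ C₂, ∀ b ∈ B, ¬ Relation.TransGen E c b := by
  intro c hc b hb hcb
  have hbC : b ∉ C := fun h => Set.disjoint_left.mp hBC hb h
  have hbC₂ : b ∉ C₂ := fun h => hbC (hC₂ h)
  obtain ⟨n, f, hn, h0, hend, hmid, hedge⟩ := extract_suffix E C₂ hcb hc hbC₂
  set g : ℕ → V := fun i => f (n - i) with hg
  have hwalk : ∀ i < n, (E (g i) (g (i + 1)) ∧ g (i + 1) ∉ C₂) ∨
      (E (g (i + 1)) (g i) ∧ g i ∉ C₂) := by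
    intro i hi
    right
    have h1 : n - i = n - (i + 1) + 1 := by omega
    constructor
    · show E (f (n - (i + 1))) (f (n - i))
      rw [h1]
      exact hedge (n - (i + 1)) (by omega)
    · exact hmid (n - i) (by omega) (by omega)
  obtain ⟨i, hi0, hin, hblk⟩ := hd n g (by simpa [hg, hend] using hb)
    (by simpa [hg] using hC₂ h0) hwalk
  rcases hblk with ⟨_, hiD⟩ | ⟨hcol, _, _⟩
  · -- non-collider in D : then f 0 ∈ C₂ is an ancestor of g i ∈ D
    have htg : Relation.TransGen E (f 0) (f (n - i)) :=
      chain_transGen hedge (n - i) (by omega) (by omega)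
    exact Set.disjoint_left.mp hC₂anc h0 ⟨f (n - i), hiD, htg⟩
  · -- collider : gives a 2-cycle
    have h1 : n - (i - 1) = n - i + 1 := by omega
    have hA : E (f (n - i + 1)) (f (n - i)) := by
      have := hcol.1
      simp only [hg] at this
      rw [h1] at this
      exact this.1
    have hB' : E (f (n - i)) (f (n - i + 1)) := hedge (n - i) (by omega)
    exact hacyc _ ((Relation.TransGen.single hB').tail hA)
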